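/- The number of 2×n Nurikabe grids is 6·2^n - 3n - 5 for all n ≥ 0. -/

import Mathlib

/-- Orthogonal adjacency of cells in a `2 × n` grid. -/
def GridAdj {n : ℕ} (a b : Fin 2 × Fin n) : Prop :=
  (a.1 = b.1 ∧ (a.2.val + 1 = b.2.val ∨ b.2.val + 1 = a.2.val)) ∨
  (a.2 = b.2 ∧ a.1 ≠ b.1)

/-- A `2 × n` Nurikabe grid: the black cells (`c i j = true`) are edge-connected and
no `2 × 2` subgrid is entirely black. -/
def IsNurikabe {n : ℕ} (c : Fin 2 → Fin n → Bool) : Prop :=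
  (∀ a b : Fin 2 × Fin n, c a.1 a.2 = true → c b.1 b.2 = true →
    Relation.ReflTransGen (fun x y => GridAdj x y ∧ c y.1 y.2 = true) a b) ∧
  (∀ j : Fin n, ∀ h : j.val + 1 < n,
    ¬(c 0 j = true ∧ c 1 j = true ∧ c 0 ⟨j.val + 1, h⟩ = true ∧ c 1 ⟨j.val + 1, h⟩ = true))

abbrev Col := Bool × Bool

def colNe (x : Col) : Bool := x.1 || x.2
def colOk (x y : Col) : Bool := ((x.1 && y.1) || (x.2 && y.2)) && !(x.1 && x.2 && y.1 && y.2)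

def Pre {n : ℕ} (w : Fin n → Col) : Prop :=
  ∀ j k : Fin n, j ≤ k → colNe (w k) = true → colNe (w j) = true

def Itv {n : ℕ} (w : Fin n → Col) : Prop :=
  ∀ i j k : Fin n, i ≤ j → j ≤ k → colNe (w i) = true → colNe (w k) = true → colNe (w j) = true

def AdjOk {n : ℕ} (w : Fin n → Col) : Prop :=
  ∀ (i : Fin n) (h : (i : ℕ) + 1 < n),
    colNe (w i) = true → colNe (w ⟨(i : ℕ) + 1, h⟩) = true →
      colOk (w i) (w ⟨(i : ℕ) + 1, h⟩) = true

def FirstOk {n : ℕ} (x : Col) (w : Fin n → Col) : Prop :=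
  ∀ h0 : 0 < n, colNe (w ⟨0, h0⟩) = true → colOk x (w ⟨0, h0⟩) = true

def QW {n : ℕ} (w : Fin n → Col) : Prop := Itv w ∧ AdjOk w

def RW {n : ℕ} (w : Fin n → Col) : Prop := Pre w ∧ AdjOk w ∧ ∃ j, colNe (w j) = true

def EmptyW {n : ℕ} (w : Fin n → Col) : Prop := ∀ j, colNe (w j) = false

lemma pre_itv {n : ℕ} {w : Fin n → Col} (h : Pre w) : Itv w :=
  fun _ j k _ hjk _ hk => h j k hjk hk

lemma emptyW_pre {n : ℕ} {w : Fin n → Col} (h : EmptyW w) : Pre w := by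
  intro j k _ hk; rw [h k] at hk; exact absurd hk (by simp)

lemma emptyW_adjOk {n : ℕ} {w : Fin n → Col} (h : EmptyW w) : AdjOk w := by
  intro i hi hne; rw [h _] at hne; exact absurd hne (by simp)

lemma emptyW_qw {n : ℕ} {w : Fin n → Col} (h : EmptyW w) : QW w :=
  ⟨pre_itv (emptyW_pre h), emptyW_adjOk h⟩

lemma rw_qw {n : ℕ} {w : Fin n → Col} (h : RW w) : QW w := ⟨pre_itv h.1, h.2.1⟩

-- cons index lemmas
lemma cons_mk_zero {n : ℕ} (x : Col) (w : Fin n → Col) (h : 0 < n + 1) :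
    (Fin.cons x w : Fin (n+1) → Col) ⟨0, h⟩ = x := rfl

lemma cons_mk_succ {n : ℕ} (x : Col) (w : Fin n → Col) (i : ℕ) (h : i + 1 < n + 1) :
    (Fin.cons x w : Fin (n+1) → Col) ⟨i + 1, h⟩ = w ⟨i, Nat.lt_of_succ_lt_succ h⟩ :=
  Fin.cons_succ (α := fun _ => Col) x w ⟨i, Nat.lt_of_succ_lt_succ h⟩

lemma adjOk_of_cons {n : ℕ} {x : Col} {w : Fin n → Col} (h : AdjOk (Fin.cons x w)) :
    AdjOk w := by
  intro i hi h1 h2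
  have := h ⟨(i : ℕ) + 1, Nat.succ_lt_succ i.isLt⟩ (Nat.succ_lt_succ hi)
  rw [cons_mk_succ, cons_mk_succ] at this
  exact this h1 h2

example : True := trivial

instance {n : ℕ} : DecidablePred (@QW n) := fun w => by unfold QW Itv AdjOk; infer_instance
instance {n : ℕ} : DecidablePred (@RW n) := fun w => by unfold RW Pre AdjOk; infer_instance
instance {n : ℕ} : DecidablePred (@EmptyW n) := fun w => by unfold EmptyW; infer_instance

lemma firstOk_of_cons {n : ℕ} {x : Col} {w : Fin n → Col}
    (h : AdjOk (Fin.cons x w)) (hx : colNe x = true) : FirstOk x w := by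
  intro h0 h1
  have := h ⟨0, Nat.succ_pos n⟩ (Nat.succ_lt_succ h0)
  rw [cons_mk_succ] at this
  rw [cons_mk_zero] at this
  exact this hx h1

lemma adjOk_of_cons' {n : ℕ} {x : Col} {w : Fin n → Col} (h : AdjOk (Fin.cons x w)) :
    AdjOk w := adjOk_of_cons h

lemma adjOk_cons {n : ℕ} {x : Col} {w : Fin n → Col} (hA : AdjOk w)
    (hF : colNe x = true → FirstOk x w) : AdjOk (Fin.cons x w) := by
  rintro ⟨iv, hiv⟩ h h1 h2
  cases iv with
  | zero =>
    rw [cons_mk_zero] at h1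
    rw [cons_mk_succ] at h2
    rw [cons_mk_zero, cons_mk_succ]
    exact hF h1 (Nat.lt_of_succ_lt_succ h) h2
  | succ t =>
    rw [cons_mk_succ] at h1 h2
    rw [cons_mk_succ, cons_mk_succ]
    exact hA ⟨t, Nat.lt_of_succ_lt_succ hiv⟩ (Nat.lt_of_succ_lt_succ h) h1 h2

lemma ch1 {n : ℕ} (x : Col) (w : Fin n → Col) :
    QW (Fin.cons x w) ↔ QW w ∧ (colNe x = true → Pre w ∧ FirstOk x w) := by
  constructor
  · rintro ⟨hI, hA⟩
    refine ⟨⟨?_, adjOk_of_cons hA⟩, fun hx => ⟨?_, firstOk_of_cons hA hx⟩⟩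
    · intro i j k hij hjk hi hk
      have := hI i.succ j.succ k.succ (by simpa using hij) (by simpa using hjk)
        (by simpa [Fin.cons_succ] using hi) (by simpa [Fin.cons_succ] using hk)
      simpa [Fin.cons_succ] using this
    · intro j k hjk hk
      have := hI 0 j.succ k.succ (by simp) (by simpa using hjk)
        (by simpa using hx) (by simpa [Fin.cons_succ] using hk)
      simpa [Fin.cons_succ] using this
  · rintro ⟨⟨hI, hA⟩, hx⟩
    refine ⟨?_, adjOk_cons hA (fun h => (hx h).2)⟩
    rintro ⟨iv, hiv⟩ ⟨jv, hjv⟩ ⟨kv, hkv⟩ hij hjk hi hk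
    rw [Fin.mk_le_mk] at hij hjk
    cases jv with
    | zero =>
      interval_cases iv
      exact hi
    | succ v =>
      cases kv with
      | zero => omega
      | succ u =>
        rw [cons_mk_succ] at hk ⊢
        cases iv with
        | zero =>
          rw [cons_mk_zero] at hi
          exact ((hx hi).1) ⟨v, Nat.lt_of_succ_lt_succ hjv⟩ ⟨u, Nat.lt_of_succ_lt_succ hkv⟩
            (by rw [Fin.mk_le_mk]; omega) hk
        | succ t =>
          rw [cons_mk_succ] at hi
          exact hI ⟨t, Nat.lt_of_succ_lt_succ hiv⟩ ⟨v, Nat.lt_of_succ_lt_succ hjv⟩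
            ⟨u, Nat.lt_of_succ_lt_succ hkv⟩ (by rw [Fin.mk_le_mk]; omega)
            (by rw [Fin.mk_le_mk]; omega) hi hk

lemma ch2 {n : ℕ} (x : Col) (w : Fin n → Col) :
    RW (Fin.cons x w) ↔ colNe x = true ∧ Pre w ∧ AdjOk w ∧ FirstOk x w := by
  constructor
  · rintro ⟨hP, hA, j, hj⟩
    have hx : colNe x = true := by
      have := hP 0 j (Fin.zero_le j) hj
      simpa using this
    refine ⟨hx, ?_, adjOk_of_cons hA, firstOk_of_cons hA hx⟩
    intro j k hjk hk
    have := hP j.succ k.succ (by simpa using hjk) (by simpa [Fin.cons_succ] using hk)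
    simpa [Fin.cons_succ] using this
  · rintro ⟨hx, hP, hA, hF⟩
    refine ⟨?_, adjOk_cons hA (fun _ => hF), 0, by simpa using hx⟩
    rintro ⟨jv, hjv⟩ ⟨kv, hkv⟩ hjk hk
    rw [Fin.mk_le_mk] at hjk
    cases jv with
    | zero => rw [cons_mk_zero]; exact hx
    | succ v =>
      cases kv with
      | zero => omega
      | succ u =>
        rw [cons_mk_succ] at hk ⊢
        exact hP ⟨v, Nat.lt_of_succ_lt_succ hjv⟩ ⟨u, Nat.lt_of_succ_lt_succ hkv⟩
          (by rw [Fin.mk_le_mk]; omega) hk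

lemma card_cond3 : ∀ y : Col, colNe y = true →
    Fintype.card {x : Col // colNe x = true → colOk x y = true} = 3 := by decide

lemma card_cond2 : ∀ y : Col, colNe y = true →
    Fintype.card {x : Col // colNe x = true ∧ colOk x y = true} = 2 := by decide

lemma card_ne_false : Fintype.card {x : Col // colNe x = false} = 1 := by decide

lemma card_ne_true : Fintype.card {x : Col // colNe x = true} = 3 := by decide

lemma colNe_false_iff : ∀ x : Col, colNe x = false ↔ x = (false, false) := by decide

lemma not_emptyW_exists {n : ℕ} {w : Fin n → Col} (h : ¬ EmptyW w) :
    ∃ j, colNe (w j) = true := by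
  unfold EmptyW at h
  push_neg at h
  obtain ⟨j, hj⟩ := h
  exact ⟨j, by simpa using hj⟩

lemma rw_first {n : ℕ} {w : Fin n → Col} (h : RW w) :
    ∃ h0 : 0 < n, colNe (w ⟨0, h0⟩) = true := by
  obtain ⟨hP, -, j, hj⟩ := h
  have h0 : 0 < n := lt_of_le_of_lt (Nat.zero_le _) j.isLt
  exact ⟨h0, hP ⟨0, h0⟩ j (by rw [Fin.mk_le_mk]; exact Nat.zero_le _) hj⟩

lemma card_cons_qw {n : ℕ} (w : Fin n → Col) :
    Nat.card {x : Col // QW (Fin.cons x w)} =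
      (if QW w then 1 else 0) + (if EmptyW w then 3 else 0) + (if RW w then 2 else 0) := by
  by_cases hq : QW w
  · by_cases he : EmptyW w
    · have hr : ¬ RW w := by
        rintro ⟨-, -, j, hj⟩; rw [he j] at hj; simp at hj
      rw [if_pos hq, if_pos he, if_neg hr]
      have hall : ∀ x : Col, QW (Fin.cons x w) := by
        intro x
        rw [ch1]
        exact ⟨hq, fun hx => ⟨emptyW_pre he, fun h0 h1 => by rw [he _] at h1; simp at h1⟩⟩
      rw [Nat.card_congr (Equiv.subtypeUnivEquiv hall)]
      simp [Nat.card_eq_fintype_card]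
    · by_cases hr : RW w
      · rw [if_pos hq, if_neg he, if_pos hr]
        obtain ⟨h0, h1⟩ := rw_first hr
        have hiff : ∀ x : Col, QW (Fin.cons x w) ↔ (colNe x = true → colOk x (w ⟨0, h0⟩) = true) := by
          intro x
          rw [ch1]
          constructor
          · rintro ⟨-, hc⟩ hx
            exact (hc hx).2 h0 h1
          · intro hok
            exact ⟨hq, fun hx => ⟨hr.1, fun h0' h1' => hok hx⟩⟩
        rw [Nat.card_congr (Equiv.subtypeEquivRight hiff), Nat.card_eq_fintype_card]
        exact card_cond3 _ h1
      · rw [if_pos hq, if_neg he, if_neg hr]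
        have hnp : ¬ Pre w := by
          intro hp
          exact hr ⟨hp, hq.2, not_emptyW_exists he⟩
        have hiff : ∀ x : Col, QW (Fin.cons x w) ↔ colNe x = false := by
          intro x
          rw [ch1]
          constructor
          · rintro ⟨-, hc⟩
            cases hcx : colNe x with
            | false => rfl
            | true => exact absurd (hc hcx).1 hnp
          · intro hfx
            exact ⟨hq, fun hx => absurd hx (by simp [hfx])⟩
        rw [Nat.card_congr (Equiv.subtypeEquivRight hiff), Nat.card_eq_fintype_card]
        exact card_ne_false
  · have hr : ¬ RW w := fun h => hq (rw_qw h)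
    have he : ¬ EmptyW w := fun h => hq (emptyW_qw h)
    rw [if_neg hq, if_neg he, if_neg hr]
    have : IsEmpty {x : Col // QW (Fin.cons x w)} :=
      ⟨fun p => hq ((ch1 p.1 w).1 p.2).1⟩
    simp [Nat.card_of_isEmpty]

lemma card_cons_rw {n : ℕ} (w : Fin n → Col) :
    Nat.card {x : Col // RW (Fin.cons x w)} =
      (if EmptyW w then 3 else 0) + (if RW w then 2 else 0) := by
  by_cases he : EmptyW w
  · have hr : ¬ RW w := by
      rintro ⟨-, -, j, hj⟩; rw [he j] at hj; simp at hj
    rw [if_pos he, if_neg hr]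
    have hiff : ∀ x : Col, RW (Fin.cons x w) ↔ colNe x = true := by
      intro x
      rw [ch2]
      constructor
      · rintro ⟨hx, -⟩; exact hx
      · intro hx
        exact ⟨hx, emptyW_pre he, emptyW_adjOk he,
          fun h0 h1 => by rw [he _] at h1; simp at h1⟩
    rw [Nat.card_congr (Equiv.subtypeEquivRight hiff), Nat.card_eq_fintype_card]
    exact card_ne_true
  · by_cases hr : RW w
    · rw [if_neg he, if_pos hr]
      obtain ⟨h0, h1⟩ := rw_first hr
      have hiff : ∀ x : Col, RW (Fin.cons x w) ↔
          (colNe x = true ∧ colOk x (w ⟨0, h0⟩) = true) := by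
        intro x
        rw [ch2]
        constructor
        · rintro ⟨hx, -, -, hF⟩
          exact ⟨hx, hF h0 h1⟩
        · rintro ⟨hx, hok⟩
          exact ⟨hx, hr.1, hr.2.1, fun h0' h1' => hok⟩
      rw [Nat.card_congr (Equiv.subtypeEquivRight hiff), Nat.card_eq_fintype_card]
      exact card_cond2 _ h1
    · rw [if_neg he, if_neg hr]
      have : IsEmpty {x : Col // RW (Fin.cons x w)} := by
        refine ⟨fun p => ?_⟩
        obtain ⟨hx, hP, hA, hF⟩ := (ch2 p.1 w).1 p.2
        exact hr ⟨hP, hA, not_emptyW_exists he⟩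
      simp [Nat.card_of_isEmpty]

lemma card_succ_eq_sum (n : ℕ) (P : ∀ {m : ℕ}, (Fin m → Col) → Prop) :
    Nat.card {f : Fin (n+1) → Col // P f} =
      ∑ w : Fin n → Col, Nat.card {x : Col // P (Fin.cons x w)} := by
  classical
  have e1 : {f : Fin (n+1) → Col // P f} ≃
      {p : (Fin n → Col) × Col // P (Fin.cons p.2 p.1)} := by
    refine Equiv.subtypeEquiv (((Fin.consEquiv (fun _ => Col)).symm).trans (Equiv.prodComm _ _)) ?_
    intro f
    show P f ↔ P (Fin.cons (f 0) (Fin.tail f))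
    rw [Fin.cons_self_tail f]
  have e2 := Equiv.subtypeProdEquivSigmaSubtype
    (fun (w : Fin n → Col) (x : Col) => P (Fin.cons x w))
  rw [Nat.card_congr (e1.trans e2), Nat.card_eq_fintype_card, Fintype.card_sigma]
  congr 1
  funext w
  rw [Nat.card_eq_fintype_card]

lemma sum_boole' {α : Type*} [Fintype α] (p : α → Prop) [DecidablePred p] (c : ℕ) :
    ∑ a : α, (if p a then c else 0) = c * Nat.card {x // p x} := by
  rw [Nat.card_eq_fintype_card, Fintype.card_subtype, ← Finset.sum_filter]
  simp [mul_comm]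

lemma card_emptyW (n : ℕ) : Nat.card {w : Fin n → Col // EmptyW w} = 1 := by
  have hiff : ∀ w : Fin n → Col, EmptyW w ↔ w = fun _ => (false, false) := by
    intro w
    constructor
    · intro h; funext j; exact (colNe_false_iff (w j)).1 (h j)
    · rintro rfl j; rfl
  rw [Nat.card_congr (Equiv.subtypeEquivRight hiff), Nat.card_eq_fintype_card,
    Fintype.card_subtype_eq]

lemma qw_zero : Nat.card {w : Fin 0 → Col // QW w} = 1 := by
  have hall : ∀ w : Fin 0 → Col, QW w := fun w => ⟨fun i => i.elim0, fun i => i.elim0⟩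
  rw [Nat.card_congr (Equiv.subtypeUnivEquiv hall), Nat.card_eq_fintype_card]
  simp

lemma rw_zero : Nat.card {w : Fin 0 → Col // RW w} = 0 := by
  have : IsEmpty {w : Fin 0 → Col // RW w} := ⟨fun p => (p.2.2.2.choose).elim0⟩
  simp [Nat.card_of_isEmpty]

lemma counts (n : ℕ) :
    Nat.card {w : Fin n → Col // QW w} = 6 * 2 ^ n - 3 * n - 5 ∧
      Nat.card {w : Fin n → Col // RW w} = 3 * 2 ^ n - 3 := by
  induction n with
  | zero => exact ⟨by simpa using qw_zero, by simpa using rw_zero⟩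
  | succ n ih =>
    obtain ⟨hN, hP⟩ := ih
    have h2 : n < 2 ^ n := Nat.lt_two_pow_self
    have hpow : (2 : ℕ) ^ (n + 1) = 2 * 2 ^ n := by ring
    have eQ : Nat.card {f : Fin (n+1) → Col // QW f} =
        Nat.card {w : Fin n → Col // QW w} + 3 * Nat.card {w : Fin n → Col // EmptyW w}
          + 2 * Nat.card {w : Fin n → Col // RW w} := by
      rw [card_succ_eq_sum n (fun {m} w => QW w)]
      simp only [card_cons_qw]
      rw [Finset.sum_add_distrib, Finset.sum_add_distrib,
        sum_boole' (@QW n) 1, sum_boole' (@EmptyW n) 3, sum_boole' (@RW n) 2]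
      ring
    have eR : Nat.card {f : Fin (n+1) → Col // RW f} =
        3 * Nat.card {w : Fin n → Col // EmptyW w}
          + 2 * Nat.card {w : Fin n → Col // RW w} := by
      rw [card_succ_eq_sum n (fun {m} w => RW w)]
      simp only [card_cons_rw]
      rw [Finset.sum_add_distrib, sum_boole' (@EmptyW n) 3, sum_boole' (@RW n) 2]
    rw [eQ, eR, hN, hP, card_emptyW]
    constructor <;> [skip; skip] <;> omega

lemma gridAdj_symm {n : ℕ} {a b : Fin 2 × Fin n} (h : GridAdj a b) : GridAdj b a := by
  rcases h with ⟨h1, h2⟩ | ⟨h1, h2⟩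
  · exact Or.inl ⟨h1.symm, h2.symm⟩
  · exact Or.inr ⟨h1.symm, h2.symm⟩

lemma black_along {n : ℕ} {c : Fin 2 → Fin n → Bool} {a b : Fin 2 × Fin n}
    (h : Relation.ReflTransGen (fun x y => GridAdj x y ∧ c y.1 y.2 = true) a b)
    (ha : c a.1 a.2 = true) : c b.1 b.2 = true := by
  induction h with
  | refl => exact ha
  | tail p q ih => exact q.2

lemma sweep {n : ℕ} {c : Fin 2 → Fin n → Bool} {a b : Fin 2 × Fin n}
    (h : Relation.ReflTransGen (fun x y => GridAdj x y ∧ c y.1 y.2 = true) a b)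
    (ha : c a.1 a.2 = true) :
    ∀ j : Fin n, a.2.val ≤ j.val → j.val ≤ b.2.val → ∃ r, c r j = true := by
  induction h with
  | refl =>
    intro j h1 h2
    have : j = a.2 := Fin.ext (le_antisymm h2 h1)
    exact ⟨a.1, this ▸ ha⟩
  | @tail b' b'' p q ih =>
    intro j h1 h2
    by_cases hj : j.val ≤ b'.2.val
    · exact ih j h1 hj
    · push_neg at hj
      obtain ⟨hadj, hb⟩ := q
      have hjb : j = b''.2 := by
        rcases hadj with ⟨-, h' | h'⟩ | ⟨heq, -⟩
        · exact Fin.ext (by omega)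
        · exact Fin.ext (by omega)
        · have := congrArg Fin.val heq; omega
      exact ⟨b''.1, hjb ▸ hb⟩

lemma cross {n : ℕ} {c : Fin 2 → Fin n → Bool} {a b : Fin 2 × Fin n}
    (h : Relation.ReflTransGen (fun x y => GridAdj x y ∧ c y.1 y.2 = true) a b)
    (ha : c a.1 a.2 = true) :
    ∀ (t : ℕ) (ht : t + 1 < n), a.2.val ≤ t → t + 1 ≤ b.2.val →
      ∃ r : Fin 2, c r ⟨t, Nat.lt_of_succ_lt ht⟩ = true ∧ c r ⟨t + 1, ht⟩ = true := by
  induction h with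
  | refl => intro t ht h1 h2; omega
  | @tail b' b'' p q ih =>
    intro t ht h1 h2
    by_cases hj : t + 1 ≤ b'.2.val
    · exact ih t ht h1 hj
    · push_neg at hj
      obtain ⟨hadj, hb⟩ := q
      have hb' : c b'.1 b'.2 = true := black_along p ha
      rcases hadj with ⟨hrow, h' | h'⟩ | ⟨heq, -⟩
      · refine ⟨b'.1, ?_, ?_⟩
        · have e : b'.2 = ⟨t, Nat.lt_of_succ_lt ht⟩ := Fin.ext (show _ = t by omega)
          rw [← e]; exact hb'
        · have e : b''.2 = ⟨t + 1, ht⟩ := Fin.ext (show _ = t + 1 by omega)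
          rw [hrow, ← e]; exact hb
      · omega
      · have := congrArg Fin.val heq; omega

section Bridge

variable {n : ℕ} {c : Fin 2 → Fin n → Bool}

lemma ne_of_black {r : Fin 2} {j : Fin n} (h : c r j = true) :
    colNe (c 0 j, c 1 j) = true := by
  fin_cases r <;> simp_all [colNe]

lemma black_of_ne {j : Fin n} (h : colNe (c 0 j, c 1 j) = true) :
    ∃ r, c r j = true := by
  simp only [colNe, Bool.or_eq_true] at h
  rcases h with h | h
  · exact ⟨0, h⟩
  · exact ⟨1, h⟩

lemma nurikabe_qw (h : IsNurikabe c) : QW (fun j => (c 0 j, c 1 j)) := by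
  obtain ⟨hconn, h22⟩ := h
  constructor
  · intro i j k hij hjk hi hk
    obtain ⟨r, hr⟩ := black_of_ne hi
    obtain ⟨s, hs⟩ := black_of_ne hk
    have path := hconn (r, i) (s, k) hr hs
    obtain ⟨r', hr'⟩ := sweep path hr j (Fin.le_def.mp hij) (Fin.le_def.mp hjk)
    exact ne_of_black hr'
  · intro i hilt h1 h2
    obtain ⟨r, hr⟩ := black_of_ne h1
    obtain ⟨s, hs⟩ := black_of_ne h2
    have path := hconn (r, i) (s, ⟨i.val + 1, hilt⟩) hr hs
    obtain ⟨r', hc1, hc2⟩ := cross path hr i.val hilt (le_refl _) (le_refl _)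
    have hc1' : c r' i = true := by
      have : (⟨i.val, Nat.lt_of_succ_lt hilt⟩ : Fin n) = i := Fin.ext rfl
      rwa [this] at hc1
    have hdd : ¬ (c 0 i = true ∧ c 1 i = true ∧ c 0 ⟨i.val + 1, hilt⟩ = true ∧
        c 1 ⟨i.val + 1, hilt⟩ = true) := h22 i hilt
    show ((c 0 i && c 0 ⟨i.val + 1, hilt⟩ || c 1 i && c 1 ⟨i.val + 1, hilt⟩) &&
      !(c 0 i && c 1 i && c 0 ⟨i.val + 1, hilt⟩ && c 1 ⟨i.val + 1, hilt⟩)) = true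
    rw [Bool.and_eq_true, Bool.or_eq_true, Bool.not_eq_true']
    constructor
    · fin_cases r'
      · exact Or.inl (by rw [Bool.and_eq_true]; exact ⟨hc1', hc2⟩)
      · exact Or.inr (by rw [Bool.and_eq_true]; exact ⟨hc1', hc2⟩)
    · cases e : (c 0 i && c 1 i && c 0 ⟨i.val + 1, hilt⟩ && c 1 ⟨i.val + 1, hilt⟩) with
      | false => rfl
      | true =>
        simp only [Bool.and_eq_true] at e
        exact absurd ⟨e.1.1.1, e.1.1.2, e.1.2, e.2⟩ hdd

lemma qw_nurikabe (h : QW (fun j => (c 0 j, c 1 j))) : IsNurikabe c := by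
  obtain ⟨hI, hA⟩ := h
  set R' := fun (a b : Fin 2 × Fin n) => GridAdj a b ∧ c a.1 a.2 = true ∧ c b.1 b.2 = true
    with hR'
  have hsym : Symmetric R' := fun a b ⟨h1, h2, h3⟩ => ⟨gridAdj_symm h1, h3, h2⟩
  have sameCol : ∀ (i : Fin n) (r s : Fin 2), c r i = true → c s i = true →
      Relation.ReflTransGen R' (r, i) (s, i) := by
    intro i r s hr hs
    by_cases hrs : r = s
    · subst hrs; exact Relation.ReflTransGen.refl
    · exact Relation.ReflTransGen.single ⟨Or.inr ⟨rfl, hrs⟩, hr, hs⟩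
  have P1 : ∀ (t : ℕ) (ht : t < n) (i : Fin n), i.val ≤ t → ∀ (r s : Fin 2),
      c r i = true → c s ⟨t, ht⟩ = true →
        Relation.ReflTransGen R' (r, i) (s, ⟨t, ht⟩) := by
    intro t
    induction t with
    | zero =>
      intro ht i hit r s hr hs
      have : i = ⟨0, ht⟩ := Fin.ext (show _ = 0 by omega)
      subst this
      exact sameCol _ r s hr hs
    | succ t iht =>
      intro ht i hit r s hr hs
      by_cases hi2 : i.val = t + 1
      · have : i = ⟨t + 1, ht⟩ := Fin.ext hi2
        subst this
        exact sameCol _ r s hr hs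
      · have hit' : i.val ≤ t := by omega
        have htn : t < n := by omega
        have hnet1 : colNe (c 0 ⟨t + 1, ht⟩, c 1 ⟨t + 1, ht⟩) = true := ne_of_black hs
        have hnet : colNe (c 0 ⟨t, htn⟩, c 1 ⟨t, htn⟩) = true :=
          hI i ⟨t, htn⟩ ⟨t + 1, ht⟩ (by rw [Fin.le_def]; exact hit')
            (by rw [Fin.le_def]; exact Nat.le_succ t) (ne_of_black hr) hnet1
        have hok := hA ⟨t, htn⟩ ht hnet hnet1
        simp only [colOk, Bool.and_eq_true, Bool.or_eq_true] at hok
        obtain ⟨hshare, -⟩ := hok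
        have hstep : ∃ r' : Fin 2, c r' ⟨t, htn⟩ = true ∧ c r' ⟨t + 1, ht⟩ = true := by
          rcases hshare with ⟨ha, hb⟩ | ⟨ha, hb⟩
          · exact ⟨0, ha, hb⟩
          · exact ⟨1, ha, hb⟩
        obtain ⟨r', hc1, hc2⟩ := hstep
        have path1 := iht htn i hit' r r' hr hc1
        have step : R' (r', ⟨t, htn⟩) (r', ⟨t + 1, ht⟩) :=
          ⟨Or.inl ⟨rfl, Or.inl rfl⟩, hc1, hc2⟩
        exact (path1.tail step).trans (sameCol _ r' s hc2 hs)
  constructor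
  · intro a b ha hb
    have mono : ∀ {x y : Fin 2 × Fin n}, Relation.ReflTransGen R' x y →
        Relation.ReflTransGen (fun x y => GridAdj x y ∧ c y.1 y.2 = true) x y := by
      intro x y hxy
      exact Relation.ReflTransGen.mono (fun u v huv => ⟨huv.1, huv.2.2⟩) _ _ hxy
    rcases le_or_gt a.2.val b.2.val with hle | hlt
    · have := P1 b.2.val b.2.isLt a.2 hle a.1 b.1 ha (by simpa using hb)
      exact mono (by simpa using this)
    · have := P1 a.2.val a.2.isLt b.2 (le_of_lt hlt) b.1 a.1 hb (by simpa using ha)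
      exact mono (by haveI hS : Std.Symm R' := ⟨fun a b h => hsym h⟩; exact Std.Symm.symm _ _ (by simpa using this))
  · rintro j hj ⟨h1, h2, h3, h4⟩
    have := hA j hj (by simp [colNe, h1]) (by simp [colNe, h3])
    simp [colOk, h1, h2, h3, h4] at this

end Bridge

def colEquiv (n : ℕ) : (Fin 2 → Fin n → Bool) ≃ (Fin n → Col) :=
  (piFinTwoEquiv fun _ => Fin n → Bool).trans
    (Equiv.arrowProdEquivProdArrow (Fin n) (fun _ => Bool) (fun _ => Bool)).symm

theorem nurikabe_count (n : ℕ) :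
    Nat.card {c : Fin 2 → Fin n → Bool // IsNurikabe c} = 6 * 2 ^ n - 3 * n - 5 := by
  have hE : ∀ c, IsNurikabe c ↔ QW (colEquiv n c) := by
    intro c
    show IsNurikabe c ↔ QW (fun j => (c 0 j, c 1 j))
    exact ⟨nurikabe_qw, qw_nurikabe⟩
  rw [Nat.card_congr (Equiv.subtypeEquiv (colEquiv n) hE), (counts n).1]
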